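/- arXiv:1811.05620 — 5 statements merged into one kernel-verified Lean document; each statement's English description precedes it below -/
import Mathlib

section
/- Let K be an algebraically closed field of characteristic 3 and let G be a finite subgroup of SL(3,K) of order 3^r (r ≥ 1) containing no pseudo-reflections. Then G is isomorphic to the elementary abelian group (Z/3Z)^r. -/
set_option linter.unusedSectionVars false

open Matrix Module LinearMap

namespace Stmt8

variable {K : Type*} [Field K] [CharP K 3]

lemma matrix_eq_zero {M : Matrix (Fin 3) (Fin 3) K} (h : ∀ x, M *ᵥ x = 0) : M = 0 := by
  ext i j
  have := congrFun (h (Pi.single j 1)) i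
  simpa using this

lemma char_triv {μ : K} {n : ℕ} (h : μ ^ 3 ^ n = 1) : μ = 1 := by
  have h2 : (μ - 1) ^ 3 ^ n = 0 := by
    rw [sub_pow_char_pow, h, one_pow, sub_self]
  have := pow_eq_zero_iff (n := 3 ^ n) (by positivity) |>.mp h2
  exact sub_eq_zero.mp this

lemma eigen_pow {M : Matrix (Fin 3) (Fin 3) K} {x : Fin 3 → K} {μ : K}
    (h : M *ᵥ x = μ • x) : ∀ n, M ^ n *ᵥ x = μ ^ n • x := by
  intro n
  induction n with
  | zero => simp
  | succ n ih =>
    rw [pow_succ', ← Matrix.mulVec_mulVec, ih, Matrix.mulVec_smul, h, smul_smul, ← pow_succ]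

lemma eigen_pow_vecMul {M : Matrix (Fin 3) (Fin 3) K} {x : Fin 3 → K} {μ : K}
    (h : x ᵥ* M = μ • x) : ∀ n, x ᵥ* M ^ n = μ ^ n • x := by
  intro n
  induction n with
  | zero => simp
  | succ n ih =>
    rw [pow_succ, ← Matrix.vecMul_vecMul, ih, Matrix.smul_vecMul, h, smul_smul, ← pow_succ]



lemma span_of_finrank_one {p : Submodule K (Fin 3 → K)} (h : finrank K p = 1) :
    ∃ v : Fin 3 → K, v ≠ 0 ∧ p = Submodule.span K {v} := by
  have hnb : p ≠ ⊥ := by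
    intro hb
    rw [hb, finrank_bot] at h
    exact one_ne_zero h.symm
  obtain ⟨v, hvp, hv0⟩ := Submodule.exists_mem_ne_zero_of_ne_bot hnb
  refine ⟨v, hv0, ?_⟩
  refine (Submodule.eq_of_le_of_finrank_le ?_ ?_).symm
  · rwa [Submodule.span_singleton_le_iff_mem]
  · rw [h, finrank_span_singleton hv0]

section Key

variable (K)

theorem key (G : Subgroup (Matrix.SpecialLinearGroup (Fin 3) K)) (r : ℕ) (hr : 1 ≤ r)
    (hcard : Nat.card G = 3 ^ r)
    (hsmall : ∀ g ∈ G,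
      Module.finrank K
        (LinearMap.ker
          (Matrix.mulVecLin (↑g : Matrix (Fin 3) (Fin 3) K) - LinearMap.id)) ≠ 2) :
    (∀ g h : G, g * h = h * g) ∧ ∀ g : G, g ^ 3 = 1 := by
  haveI : Finite G := Nat.finite_of_card_ne_zero (by rw [hcard]; positivity)
  haveI : Fact (Nat.Prime 3) := ⟨by norm_num⟩
  set Mg : G → Matrix (Fin 3) (Fin 3) K := fun g => ((g : Matrix.SpecialLinearGroup (Fin 3) K) : Matrix (Fin 3) (Fin 3) K) with hMg
  have hV3 : finrank K (Fin 3 → K) = 3 := by simp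
  have mvl : ∀ M : Matrix (Fin 3) (Fin 3) K, M.mulVecLin - LinearMap.id = (M - 1).mulVecLin := by
    intro M; ext x; simp [Matrix.sub_mulVec, Matrix.one_apply, Pi.single_apply, eq_comm]
  have hsmall' : ∀ g : G, finrank K (ker (Mg g - 1).mulVecLin) ≠ 2 := by
    intro g
    rw [← mvl]
    exact hsmall g g.2
  have hrn : ∀ M : Matrix (Fin 3) (Fin 3) K,
      M.rank + finrank K (ker M.mulVecLin) = 3 := by
    intro M
    rw [Matrix.rank, LinearMap.finrank_range_add_finrank_ker, hV3]
  have hcm : ∀ a b : G, Mg (a * b) = Mg a * Mg b := by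
    intro a b
    simp [hMg, Subgroup.coe_mul, Matrix.SpecialLinearGroup.coe_mul]
  have hone : Mg 1 = 1 := by
    simp [hMg, Subgroup.coe_one, Matrix.SpecialLinearGroup.coe_one]
  have hpow : ∀ (a : G) (n : ℕ), Mg (a ^ n) = Mg a ^ n := by
    intro a n
    induction n with
    | zero => simpa using hone
    | succ n ih => rw [pow_succ, pow_succ, hcm, ih]
  have hMginj : Function.Injective Mg := fun a b h => Subtype.ext (Subtype.ext h)
  -- every element's matrix satisfies x ^ 3 ^ r = 1
  have hN : ∀ g : G, Mg g ^ 3 ^ r = 1 := by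
    intro g
    have h1 : g ^ 3 ^ r = 1 := by rw [← hcard]; exact pow_card_eq_one'
    rw [← hpow, h1, hone]
  have hnil : ∀ g : G, (Mg g - 1) ^ 3 ^ r = 0 := by
    intro g
    rw [sub_pow_char_pow_of_commute 3 r (Commute.one_right _), hN, one_pow, sub_self]
  -- kernel of nontrivial element has dimension 1
  have hker1 : ∀ g : G, Mg g ≠ 1 → finrank K (ker (Mg g - 1).mulVecLin) = 1 := by
    intro g hg
    have hle : finrank K (ker (Mg g - 1).mulVecLin) ≤ 3 :=
      le_trans (Submodule.finrank_le _) (le_of_eq hV3)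
    have hne0 : finrank K (ker (Mg g - 1).mulVecLin) ≠ 0 := by
      have hdet : (Mg g - 1).det = 0 := by
        have : ((Mg g - 1).det) ^ 3 ^ r = 0 := by
          rw [← Matrix.det_pow, hnil, Matrix.det_zero]
        exact pow_eq_zero_iff (by positivity) |>.mp this
      obtain ⟨x, hx0, hx⟩ := (Matrix.exists_mulVec_eq_zero_iff).mpr hdet
      intro h0
      have : ker (Mg g - 1).mulVecLin = ⊥ := Submodule.finrank_eq_zero.mp h0
      have hxk : x ∈ ker (Mg g - 1).mulVecLin := by
        rw [LinearMap.mem_ker, Matrix.mulVecLin_apply, hx]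
      rw [this, Submodule.mem_bot] at hxk
      exact hx0 hxk
    have hne3 : finrank K (ker (Mg g - 1).mulVecLin) ≠ 3 := by
      intro h3
      have htop : ker (Mg g - 1).mulVecLin = ⊤ := by
        apply Submodule.eq_top_of_finrank_eq
        rw [h3, hV3]
      have hzero : Mg g - 1 = 0 := by
        apply matrix_eq_zero
        intro x
        have : x ∈ ker (Mg g - 1).mulVecLin := htop ▸ Submodule.mem_top
        rwa [LinearMap.mem_ker, Matrix.mulVecLin_apply] at this
      exact hg (by rwa [sub_eq_zero] at hzero)
    have := hsmall' g
    omega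
  -- G is nontrivial with a nontrivial central element z
  haveI : Nontrivial G := by
    rw [← Finite.one_lt_card_iff_nontrivial, hcard]
    calc 1 < 3 ^ 1 := by norm_num
      _ ≤ 3 ^ r := Nat.pow_le_pow_right (by norm_num) hr
  have hpG : IsPGroup 3 G := IsPGroup.of_card hcard
  haveI := hpG.center_nontrivial
  obtain ⟨z0, hz0⟩ := exists_ne (1 : Subgroup.center G)
  set z : G := (z0 : G) with hzdef
  have hzne : Mg z ≠ 1 := by
    intro h
    exact hz0 (Subtype.ext (hMginj (by rw [h]; exact hone.symm)))
  have hzcomm : ∀ g : G, Mg z * Mg g = Mg g * Mg z := by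
    intro g
    have h0 : g * z = z * g := Subgroup.mem_center_iff.mp z0.2 g
    rw [← hcm, ← hcm, h0]
  set A : Matrix (Fin 3) (Fin 3) K := Mg z - 1 with hA
  have hAcomm : ∀ g : G, A * Mg g = Mg g * A := by
    intro g
    simp only [hA, Matrix.sub_mul, Matrix.mul_sub, Matrix.one_mul, Matrix.mul_one, hzcomm g]
  have hAnil : A ^ 3 ^ r = 0 := hnil z
  have hAker : finrank K (ker A.mulVecLin) = 1 := hker1 z hzne
  -- v spans the kernel of A
  obtain ⟨v, hv0, hvspan⟩ := span_of_finrank_one hAker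
  have hvker : A *ᵥ v = 0 := by
    have : v ∈ ker A.mulVecLin := by rw [hvspan]; exact Submodule.mem_span_singleton_self v
    rwa [LinearMap.mem_ker, Matrix.mulVecLin_apply] at this
  -- w spans the kernel of Aᵀ
  have hAtker : finrank K (ker Aᵀ.mulVecLin) = 1 := by
    have h1 := hrn A
    have h2 := hrn Aᵀ
    rw [Matrix.rank_transpose] at h2
    omega
  obtain ⟨w, hw0, hwspan⟩ := span_of_finrank_one hAtker
  have hwA : w ᵥ* A = 0 := by
    have : w ∈ ker Aᵀ.mulVecLin := by rw [hwspan]; exact Submodule.mem_span_singleton_self w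
    rw [LinearMap.mem_ker, Matrix.mulVecLin_apply, Matrix.mulVec_transpose] at this
    exact this
  -- A² ≠ 0
  have hA2 : A * A ≠ 0 := by
    intro h2
    have hle : LinearMap.range A.mulVecLin ≤ ker A.mulVecLin := by
      rintro y ⟨x, rfl⟩
      rw [LinearMap.mem_ker, Matrix.mulVecLin_apply, Matrix.mulVecLin_apply,
        Matrix.mulVec_mulVec, h2, Matrix.zero_mulVec]
    have h1 := Submodule.finrank_mono hle
    rw [hAker] at h1
    have h2' := hrn A
    rw [hAker, Matrix.rank] at h2'
    omega
  -- the fixed line is inside the invariant plane : w ⬝ᵥ v = 0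
  classical
  have hwv : w ⬝ᵥ v = 0 := by
    have hex : ∃ t, A ^ t = 0 := ⟨3 ^ r, hAnil⟩
    set t := Nat.find hex with ht
    have htspec : A ^ t = 0 := Nat.find_spec hex
    have ht3 : 3 ≤ t := by
      by_contra hlt
      push_neg at hlt
      apply hA2
      have h2 : A ^ 2 = A ^ t * A ^ (2 - t) := by rw [← pow_add]; congr 1; omega
      rw [htspec, Matrix.zero_mul] at h2
      rw [← pow_two]
      exact h2
    have hm1 : A ^ (t - 1) ≠ 0 := Nat.find_min hex (by omega)
    have hx1 : ∃ x1, (A ^ (t - 1)) *ᵥ x1 ≠ 0 := by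
      by_contra hc
      push_neg at hc
      exact hm1 (matrix_eq_zero hc)
    obtain ⟨x1, hx1⟩ := hx1
    set y := (A ^ (t - 1)) *ᵥ x1 with hy
    have hyk : A *ᵥ y = 0 := by
      rw [hy, Matrix.mulVec_mulVec, ← pow_succ']
      have htt : t - 1 + 1 = t := by omega
      rw [htt, htspec, Matrix.zero_mulVec]
    have hyker : y ∈ ker A.mulVecLin := by
      rw [LinearMap.mem_ker, Matrix.mulVecLin_apply]; exact hyk
    rw [hvspan, Submodule.mem_span_singleton] at hyker
    obtain ⟨c, hc⟩ := hyker
    have hc0 : c ≠ 0 := by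
      rintro rfl
      rw [zero_smul] at hc
      exact hx1 hc.symm
    have hwy : w ⬝ᵥ y = 0 := by
      rw [hy, Matrix.dotProduct_mulVec]
      have hwAm : w ᵥ* A ^ (t - 1) = 0 := by
        obtain ⟨k, hk⟩ : ∃ k, t - 1 = k + 1 := ⟨t - 2, by omega⟩
        rw [hk, pow_succ', ← Matrix.vecMul_vecMul, hwA, Matrix.zero_vecMul]
      rw [hwAm, zero_dotProduct]
    rw [← hc, dotProduct_smul, smul_eq_mul] at hwy
    exact (mul_eq_zero.mp hwy).resolve_left hc0
  -- common fixed vector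
  have hgv : ∀ g : G, Mg g *ᵥ v = v := by
    intro g
    have h1 : A *ᵥ (Mg g *ᵥ v) = 0 := by
      rw [Matrix.mulVec_mulVec, hAcomm, ← Matrix.mulVec_mulVec, hvker, Matrix.mulVec_zero]
    have h2 : Mg g *ᵥ v ∈ ker A.mulVecLin := by
      rw [LinearMap.mem_ker, Matrix.mulVecLin_apply]; exact h1
    rw [hvspan, Submodule.mem_span_singleton] at h2
    obtain ⟨μ, hμ⟩ := h2
    have hμpow := eigen_pow hμ.symm (3 ^ r)
    rw [hN g, Matrix.one_mulVec] at hμpow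
    have h3 : (μ ^ 3 ^ r - 1) • v = 0 := by
      rw [sub_smul, one_smul, ← hμpow, sub_self]
    have hμ1 : μ ^ 3 ^ r = 1 := by
      rcases smul_eq_zero.mp h3 with h | h
      · exact sub_eq_zero.mp h
      · exact absurd h hv0
    rw [char_triv hμ1, one_smul] at hμ
    exact hμ.symm
  -- common fixed covector
  have hgw : ∀ g : G, w ᵥ* Mg g = w := by
    intro g
    have h1 : (w ᵥ* Mg g) ᵥ* A = 0 := by
      rw [Matrix.vecMul_vecMul, ← hAcomm, ← Matrix.vecMul_vecMul, hwA, Matrix.zero_vecMul]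
    have h2 : w ᵥ* Mg g ∈ ker Aᵀ.mulVecLin := by
      rw [LinearMap.mem_ker, Matrix.mulVecLin_apply, Matrix.mulVec_transpose]
      exact h1
    rw [hwspan, Submodule.mem_span_singleton] at h2
    obtain ⟨ν, hν⟩ := h2
    have hνpow := eigen_pow_vecMul hν.symm (3 ^ r)
    rw [hN g, Matrix.vecMul_one] at hνpow
    have h3 : (ν ^ 3 ^ r - 1) • w = 0 := by
      rw [sub_smul, one_smul, ← hνpow, sub_self]
    have hν1 : ν ^ 3 ^ r = 1 := by
      rcases smul_eq_zero.mp h3 with h | h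
      · exact sub_eq_zero.mp h
      · exact absurd h hw0
    rw [char_triv hν1, one_smul] at hν
    exact hν.symm
  -- the second basis vector u of the invariant plane
  have hx0 : ∃ x0, (A * A) *ᵥ x0 ≠ 0 := by
    by_contra hc
    push_neg at hc
    exact hA2 (matrix_eq_zero hc)
  obtain ⟨x0, hx0⟩ := hx0
  set u := A *ᵥ x0 with hu
  have hwu : w ⬝ᵥ u = 0 := by
    rw [hu, Matrix.dotProduct_mulVec, hwA, zero_dotProduct]
  have huL : u ∉ Submodule.span K {v} := by
    intro hm
    rw [Submodule.mem_span_singleton] at hm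
    obtain ⟨c, hc⟩ := hm
    apply hx0
    rw [← Matrix.mulVec_mulVec, ← hu, ← hc, Matrix.mulVec_smul, hvker, smul_zero]
  have hu0 : u ≠ 0 := by
    intro h
    apply huL
    rw [h]
    exact Submodule.zero_mem _
  -- the invariant plane H as kernel of the functional x ↦ w ⬝ᵥ x
  set ℓ : (Fin 3 → K) →ₗ[K] K :=
    { toFun := fun x => w ⬝ᵥ x
      map_add' := fun x y => by simp [dotProduct_add]
      map_smul' := fun c x => by simp [dotProduct_smul] } with hℓ
  have hℓapp : ∀ x, ℓ x = w ⬝ᵥ x := fun x => rfl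
  have hHrank : finrank K (ker ℓ) = 2 := by
    have hsurj : Function.Surjective ℓ := by
      obtain ⟨i, hi⟩ : ∃ i, w i ≠ 0 := by
        by_contra hc
        push_neg at hc
        exact hw0 (funext hc)
      intro c
      refine ⟨Pi.single i (c / w i), ?_⟩
      rw [hℓapp, dotProduct_single]
      field_simp
    have hrnℓ := LinearMap.finrank_range_add_finrank_ker ℓ
    rw [LinearMap.range_eq_top.mpr hsurj, finrank_top, hV3] at hrnℓ
    have : finrank K K = 1 := Module.finrank_self K
    omega
  have hli : LinearIndependent K ![u, v] := by
    rw [linearIndependent_fin2]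
    refine ⟨by simpa using hv0, ?_⟩
    intro a hav
    apply huL
    rw [Submodule.mem_span_singleton]
    exact ⟨a, by simpa using hav⟩
  have hrange2 : Set.range ![u, v] = {u, v} := by
    ext x
    simp [Fin.exists_fin_two, or_comm]
  have hspan2 : finrank K (Submodule.span K ({v, u} : Set (Fin 3 → K))) = 2 := by
    have h1 := finrank_span_eq_card hli
    rw [hrange2] at h1
    rw [Set.pair_comm v u, h1]
    simp
  have hHspan : ker ℓ = Submodule.span K {v, u} := by
    refine (Submodule.eq_of_le_of_finrank_le ?_ ?_).symm
    · rw [Submodule.span_le]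
      intro x hx
      have hx' : x = v ∨ x = u := hx
      refine LinearMap.mem_ker.mpr ?_
      rcases hx' with h | h
      · rw [hℓapp, h]; exact hwv
      · rw [hℓapp, h]; exact hwu
    · rw [hHrank, hspan2]
  -- coefficient uniqueness on the plane
  have hcoef : ∀ a b : K, a • v + b • u = 0 → a = 0 ∧ b = 0 := by
    intro a b hab
    have hb : b = 0 := by
      by_contra hb
      apply huL
      rw [Submodule.mem_span_singleton]
      have h1 : b • u = -(a • v) := by
        have := hab
        rw [add_comm] at this
        exact add_eq_zero_iff_eq_neg.mp this
      refine ⟨-(b⁻¹ * a), ?_⟩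
      calc (-(b⁻¹ * a)) • v = b⁻¹ • (-(a • v)) := by
            rw [smul_neg, smul_smul, neg_smul]
        _ = b⁻¹ • (b • u) := by rw [h1]
        _ = u := by rw [smul_smul, inv_mul_cancel₀ hb, one_smul]
    rw [hb, zero_smul, add_zero] at hab
    rcases smul_eq_zero.mp hab with h | h
    · exact ⟨h, hb⟩
    · exact absurd h hv0
  have hgvm : ∀ g : G, (Mg g - 1) *ᵥ v = 0 := by
    intro g
    rw [Matrix.sub_mulVec, hgv, Matrix.one_mulVec, sub_self]
  -- middle step : (g - 1) maps u into the line spanned by v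
  have hmid : ∀ g : G, ∃ α : K, (Mg g - 1) *ᵥ u = α • v := by
    intro g
    have h1 : Mg g *ᵥ u ∈ ker ℓ := by
      refine LinearMap.mem_ker.mpr ?_
      rw [hℓapp, Matrix.dotProduct_mulVec, hgw, hwu]
    rw [hHspan, Submodule.mem_span_pair] at h1
    obtain ⟨α, β, hαβ⟩ := h1
    have hind : ∀ n : ℕ, ∃ a : K, Mg g ^ n *ᵥ u = a • v + β ^ n • u := by
      intro n
      induction n with
      | zero => exact ⟨0, by simp⟩
      | succ n ih =>
        obtain ⟨a, ha⟩ := ih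
        refine ⟨a + β ^ n * α, ?_⟩
        rw [pow_succ', ← Matrix.mulVec_mulVec, ha, Matrix.mulVec_add,
          Matrix.mulVec_smul, Matrix.mulVec_smul, hgv, ← hαβ]
        rw [smul_add, add_smul, smul_smul, smul_smul]
        rw [pow_succ]
        abel
    obtain ⟨a, ha⟩ := hind (3 ^ r)
    rw [hN g, Matrix.one_mulVec] at ha
    have h2 : a • v + (β ^ 3 ^ r - 1) • u = 0 := by
      rw [sub_smul, one_smul, ← add_sub_assoc, ← ha, sub_self]
    obtain ⟨-, hb0⟩ := hcoef _ _ h2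
    have hβ1 : β = 1 := char_triv (sub_eq_zero.mp hb0)
    refine ⟨α, ?_⟩
    rw [Matrix.sub_mulVec, Matrix.one_mulVec, ← hαβ, hβ1, one_smul, add_sub_cancel_right]
  -- (g - 1) maps the plane into the line
  have hstep : ∀ g : G, ∀ x : Fin 3 → K, w ⬝ᵥ x = 0 → ∃ c : K, (Mg g - 1) *ᵥ x = c • v := by
    intro g x hx
    have hxH : x ∈ ker ℓ := LinearMap.mem_ker.mpr (by rw [hℓapp]; exact hx)
    rw [hHspan, Submodule.mem_span_pair] at hxH
    obtain ⟨a, b, hab⟩ := hxH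
    obtain ⟨α, hα⟩ := hmid g
    refine ⟨b * α, ?_⟩
    rw [← hab, Matrix.mulVec_add, Matrix.mulVec_smul, Matrix.mulVec_smul, hgvm, hα,
      smul_zero, zero_add, smul_smul]
  -- (g - 1) maps everything into the plane
  have him : ∀ g : G, ∀ x : Fin 3 → K, w ⬝ᵥ ((Mg g - 1) *ᵥ x) = 0 := by
    intro g x
    rw [Matrix.sub_mulVec, dotProduct_sub, Matrix.dotProduct_mulVec, hgw,
      Matrix.one_mulVec, sub_self]
  -- (g - 1) ^ 3 = 0, hence g ^ 3 = 1
  have hA3 : ∀ g : G, (Mg g - 1) ^ 3 = 0 := by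
    intro g
    apply matrix_eq_zero
    intro x
    obtain ⟨c, hc⟩ := hstep g _ (him g x)
    have h3 : (Mg g - 1) ^ 3 *ᵥ x = (Mg g - 1) *ᵥ ((Mg g - 1) *ᵥ ((Mg g - 1) *ᵥ x)) := by
      rw [Matrix.mulVec_mulVec, Matrix.mulVec_mulVec, ← pow_three']
    rw [h3, hc, Matrix.mulVec_smul, hgvm, smul_zero]
  have hcube : ∀ g : G, g ^ 3 = 1 := by
    intro g
    apply hMginj
    rw [hpow, hone]
    have h1 : Mg g ^ 3 = ((Mg g - 1) + 1) ^ 3 := by rw [sub_add_cancel]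
    rw [h1, add_pow_char_of_commute 3 (Commute.one_right _), hA3, one_pow, zero_add]
  -- commutativity
  have hcomm : ∀ g h : G, g * h = h * g := by
    intro g h
    set s : G := g * h * g⁻¹ * h⁻¹ with hs
    have hgh : ∀ x : Fin 3 → K, w ⬝ᵥ x = 0 →
        (Mg g * Mg h) *ᵥ x = (Mg h * Mg g) *ᵥ x := by
      intro x hx
      have haff : ∀ (p : G) (y : Fin 3 → K) (c : K),
          (Mg p - 1) *ᵥ y = c • v → Mg p *ᵥ y = y + c • v := by
        intro p y c hpc
        rw [Matrix.sub_mulVec, Matrix.one_mulVec, sub_eq_iff_eq_add] at hpc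
        rw [hpc]
        abel
      obtain ⟨cg, hcg⟩ := hstep g x hx
      obtain ⟨ch, hch⟩ := hstep h x hx
      have e1 : (Mg g * Mg h) *ᵥ x = x + ch • v + cg • v := by
        rw [← Matrix.mulVec_mulVec, haff h x ch hch, Matrix.mulVec_add,
          Matrix.mulVec_smul, hgv, haff g x cg hcg]
        abel
      have e2 : (Mg h * Mg g) *ᵥ x = x + cg • v + ch • v := by
        rw [← Matrix.mulVec_mulVec, haff g x cg hcg, Matrix.mulVec_add,
          Matrix.mulVec_smul, hgv, haff h x ch hch]
        abel
      rw [e1, e2]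
      abel
    -- the commutator fixes the image of the plane under (Mg h * Mg g)
    have hS : ∀ x : Fin 3 → K, w ⬝ᵥ x = 0 →
        (Mg s - 1) *ᵥ ((Mg h * Mg g) *ᵥ x) = 0 := by
      intro x hx
      have h0 : s * (h * g) = g * h := by rw [hs]; group
      have h1 : Mg s * (Mg h * Mg g) = Mg g * Mg h := by
        rw [← hcm, ← hcm, h0, hcm]
      rw [Matrix.sub_mulVec, Matrix.one_mulVec, Matrix.mulVec_mulVec, h1, hgh x hx,
        sub_self]
    -- hence its fixed space is at least 2-dimensional, so it is everything
    set e : (Fin 3 → K) ≃ₗ[K] Fin 3 → K :=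
      Matrix.SpecialLinearGroup.toLin' ((h * g : G) : Matrix.SpecialLinearGroup (Fin 3) K)
      with he
    have heapp : ∀ x, e x = (Mg h * Mg g) *ᵥ x := by
      intro x
      rw [he, ← hcm]
      rfl
    have hsub : Submodule.map (e : (Fin 3 → K) →ₗ[K] Fin 3 → K) (ker ℓ) ≤
        ker (Mg s - 1).mulVecLin := by
      rintro y ⟨x, hxH, rfl⟩
      have hx : w ⬝ᵥ x = 0 := by
        have := LinearMap.mem_ker.mp hxH
        rwa [hℓapp] at this
      refine LinearMap.mem_ker.mpr ?_
      rw [Matrix.mulVecLin_apply]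
      show (Mg s - 1) *ᵥ (e x) = 0
      rw [heapp]
      exact hS x hx
    have hmap2 : finrank K (Submodule.map (e : (Fin 3 → K) →ₗ[K] Fin 3 → K) (ker ℓ)) = 2 := by
      rw [LinearEquiv.finrank_map_eq, hHrank]
    have hge : 2 ≤ finrank K (ker (Mg s - 1).mulVecLin) := by
      rw [← hmap2]
      exact Submodule.finrank_mono hsub
    have hle3 : finrank K (ker (Mg s - 1).mulVecLin) ≤ 3 :=
      le_trans (Submodule.finrank_le _) (le_of_eq hV3)
    have hk3 : finrank K (ker (Mg s - 1).mulVecLin) = 3 := by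
      have := hsmall' s
      omega
    have htop : ker (Mg s - 1).mulVecLin = ⊤ :=
      Submodule.eq_top_of_finrank_eq (by rw [hk3, hV3])
    have hs1 : Mg s - 1 = 0 := by
      apply matrix_eq_zero
      intro x
      have hx : x ∈ ker (Mg s - 1).mulVecLin := htop ▸ Submodule.mem_top
      rw [LinearMap.mem_ker, Matrix.mulVecLin_apply] at hx
      exact hx
    have hs2 : s = 1 := hMginj (by rw [hone, ← sub_eq_zero]; exact hs1)
    have h0 : s * (h * g) = g * h := by rw [hs]; group
    rw [hs2, one_mul] at h0
    exact h0.symm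
  exact ⟨hcomm, hcube⟩

end Key

end Stmt8


/-- K algebraically closed of characteristic 3, G ≤ SL(3,K) finite of order 3^r
(r ≥ 1) with no pseudo-reflections (no element has 2-dimensional fixed space in K³).
Then G ≅ (ℤ/3ℤ)^r. -/
theorem stmt_8 (K : Type*) [Field K] [IsAlgClosed K] [CharP K 3]
    (G : Subgroup (Matrix.SpecialLinearGroup (Fin 3) K)) (r : ℕ) (hr : 1 ≤ r)
    (hcard : Nat.card G = 3 ^ r)
    (hsmall : ∀ g ∈ G,
      Module.finrank K
        (LinearMap.ker
          (Matrix.mulVecLin (↑g : Matrix (Fin 3) (Fin 3) K) - LinearMap.id)) ≠ 2) :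
    Nonempty (G ≃* Multiplicative (Fin r → ZMod 3)) := by
  obtain ⟨hcomm, hcube⟩ := Stmt8.key K G r hr hcard hsmall
  haveI : Finite G := Nat.finite_of_card_ne_zero (by rw [hcard]; positivity)
  letI : CommGroup G := { (inferInstance : Group G) with mul_comm := hcomm }
  letI : Module (ZMod 3) (Additive G) := AddCommGroup.zmodModule (by
    intro x
    have h1 : Additive.ofMul (x.toMul ^ 3) = (0 : Additive G) := by
      rw [hcube, ofMul_one]
    rw [ofMul_pow] at h1
    exact h1)
  haveI : Fintype (Additive G) := Fintype.ofFinite _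
  have hcard2 : Fintype.card (Additive G) = 3 ^ r := by
    rw [← Nat.card_eq_fintype_card]
    exact hcard
  have hfr : Module.finrank (ZMod 3) (Additive G) = r := by
    have hc := card_eq_pow_finrank (K := ZMod 3) (V := Additive G)
    rw [hcard2, ZMod.card] at hc
    exact Nat.pow_right_injective (by norm_num) hc.symm
  let b := Module.finBasis (ZMod 3) (Additive G)
  let e2 := (b.reindex (finCongr hfr)).equivFun
  exact ⟨AddEquiv.toMultiplicativeRight e2.toAddEquiv⟩
end

section
/- Let K be an algebraically closed field of characteristic 3 and G a finite subgroup of SL(3,K) with no pseudo-reflections whose order is a power of 3. Then every nonidentity element of G has order 3, and G is abelian. -/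
open Module LinearMap Polynomial

private lemma cube_zero' {K : Type*} [Field K] {f : Module.End K (Fin 3 → K)}
    (h : IsNilpotent f) : f ^ 3 = 0 := by
  have h1 := h.charpoly_eq_X_pow_finrank
  have h2 := f.aeval_self_charpoly
  rw [h1, Module.finrank_fin_fun, map_pow, aeval_X] at h2
  exact h2

/-- K algebraically closed of characteristic 3, G ≤ SL(3,K) with no
pseudo-reflections, of order a power of 3. Then every nonidentity element of G has
order 3, and G is abelian. -/
theorem stmt_9 (K : Type*) [Field K] [IsAlgClosed K] [CharP K 3]
    (G : Subgroup (Matrix.SpecialLinearGroup (Fin 3) K))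
    (hcard : ∃ r : ℕ, Nat.card G = 3 ^ r)
    (hsmall : ∀ g ∈ G,
      Module.finrank K
        (LinearMap.ker
          (Matrix.mulVecLin (↑g : Matrix (Fin 3) (Fin 3) K) - LinearMap.id)) ≠ 2) :
    (∀ g ∈ G, g ≠ 1 → orderOf g = 3) ∧ ∀ g ∈ G, ∀ h ∈ G, g * h = h * g := by
  obtain ⟨r, hr⟩ := hcard
  have hfact : Fact (Nat.Prime 3) := ⟨by norm_num⟩
  have hfin : Finite G := Nat.finite_of_card_ne_zero (by rw [hr]; positivity)
  -- every element of G is unipotent with cube of difference zero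
  have hnil : ∀ g ∈ G, IsNilpotent ((↑g : Matrix (Fin 3) (Fin 3) K) - 1) := by
    intro g hg
    have h1 : (⟨g, hg⟩ : G) ^ (3 ^ r) = 1 := by rw [← hr]; exact pow_card_eq_one'
    have h2 : (↑g : Matrix (Fin 3) (Fin 3) K) ^ (3 ^ r) = 1 := by
      have := congrArg (fun x : G => ((x : Matrix.SpecialLinearGroup (Fin 3) K) :
        Matrix (Fin 3) (Fin 3) K)) h1
      simpa using this
    refine ⟨3 ^ r, ?_⟩
    rw [sub_pow_char_pow_of_commute _ _ (Commute.one_right _), h2, one_pow, sub_self]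
  have key : ∀ g ∈ G, (↑g : Matrix (Fin 3) (Fin 3) K) ^ 3 = 1 := by
    intro g hg
    have h3 : ((↑g : Matrix (Fin 3) (Fin 3) K) - 1) ^ 3 = 0 := by
      have : IsNilpotent (Matrix.toLinAlgEquiv'
          ((↑g : Matrix (Fin 3) (Fin 3) K) - 1)) := (hnil g hg).map _
      have h4 := cube_zero' this
      rw [← map_pow] at h4
      have := Matrix.toLinAlgEquiv'.injective (h4.trans (map_zero _).symm)
      exact this
    have := sub_pow_char_of_commute 3 (Commute.one_right (↑g : Matrix (Fin 3) (Fin 3) K))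
    rw [h3, one_pow] at this
    -- this : 0 = g^3 - 1
    linear_combination (norm := noncomm_ring) -this
  constructor
  · intro g hg hne
    have hg3 : g ^ 3 = 1 := by
      apply Subtype.ext
      exact key g hg
    exact orderOf_eq_prime hg3 hne
  · -- abelian
    by_cases htriv : ∀ x ∈ G, x = (1 : Matrix.SpecialLinearGroup (Fin 3) K)
    · intro g hg h hh
      rw [htriv g hg, htriv h hh]
    push_neg at htriv
    obtain ⟨x0, hx0, hx0ne⟩ := htriv
    have hnontriv : Nontrivial G :=
      ⟨⟨x0, hx0⟩, 1, by simp [Subtype.ext_iff, hx0ne]⟩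
    have hpg : IsPGroup 3 G := IsPGroup.of_card hr
    have hcenter : Nontrivial (Subgroup.center G) := hpg.center_nontrivial
    obtain ⟨z, hzne⟩ := exists_ne (1 : Subgroup.center G)
    set M : Matrix (Fin 3) (Fin 3) K := (((z : G) : Matrix.SpecialLinearGroup (Fin 3) K) : Matrix (Fin 3) (Fin 3) K) with hM
    have hMmem : ((z : G) : Matrix.SpecialLinearGroup (Fin 3) K) ∈ G := (z : G).2
    set e : Matrix (Fin 3) (Fin 3) K ≃ₐ[K] Module.End K (Fin 3 → K) := Matrix.toLinAlgEquiv' with he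
    have hbridge : ∀ A : Matrix (Fin 3) (Fin 3) K, (e A : (Fin 3 → K) →ₗ[K] (Fin 3 → K)) = A.mulVecLin := fun A => rfl
    set f : Module.End K (Fin 3 → K) := e (M - 1) with hf
    have hf3 : f ^ 3 = 0 := by
      apply cube_zero'
      rw [hf]
      exact (hnil _ hMmem).map _
    have hMne : M ≠ 1 := by
      intro hc
      apply hzne
      apply Subtype.ext
      apply Subtype.ext
      apply Subtype.ext
      simpa using hc
    have hfne : f ≠ 0 := by
      rw [hf]
      intro hc
      have := e.injective (hc.trans (map_zero e).symm)
      exact hMne (by rwa [sub_eq_zero] at this)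
    have hkey3 : ∀ w, f (f (f w)) = 0 := by
      intro w
      have h1 : (f ^ 3) w = 0 := by rw [hf3]; rfl
      simpa [pow_succ, Module.End.mul_apply] using h1
    have hker2 : Module.finrank K (LinearMap.ker f) ≠ 2 := by
      have := hsmall _ hMmem
      rw [← hM] at this
      have hsub : (M - 1).mulVecLin = M.mulVecLin - LinearMap.id := by
        rw [← hbridge, map_sub, map_one, hbridge, Module.End.one_eq_id]
      rw [hf, hbridge, hsub]
      exact this
    have hker1 : Module.finrank K (LinearMap.ker f) = 1 := by
      have hle : Module.finrank K (LinearMap.ker f) ≤ 3 := by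
        have := Submodule.finrank_le (LinearMap.ker f)
        simpa [Module.finrank_fin_fun] using this
      have hne0 : Module.finrank K (LinearMap.ker f) ≠ 0 := by
        intro hc
        have hbot : LinearMap.ker f = ⊥ := Submodule.finrank_eq_zero.mp hc
        have hinj : ∀ w : Fin 3 → K, f w = 0 → w = 0 := by
          intro w hw
          have : w ∈ LinearMap.ker f := hw
          rwa [hbot, Submodule.mem_bot] at this
        have : ∀ w : Fin 3 → K, w = 0 := fun w =>
          hinj w (hinj (f w) (hinj (f (f w)) (hkey3 w)))
        obtain ⟨a, b, hab⟩ := exists_pair_ne (Fin 3 → K)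
        exact hab ((this a).trans (this b).symm)
      have hne3 : Module.finrank K (LinearMap.ker f) ≠ 3 := by
        intro hc
        have : LinearMap.ker f = ⊤ := by
          apply Submodule.eq_top_of_finrank_eq
          rw [hc, Module.finrank_fin_fun]
        exact hfne (LinearMap.ker_eq_top.mp this)
      omega
    have hrange2 : Module.finrank K (LinearMap.range f) = 2 := by
      have := f.finrank_range_add_finrank_ker
      rw [hker1, Module.finrank_fin_fun] at this
      omega
    -- f ∘ f is not zero
    have hff : ∃ v : Fin 3 → K, f (f v) ≠ 0 := by
      by_contra hc
      push_neg at hc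
      have hle : LinearMap.range f ≤ LinearMap.ker f := by
        rintro y ⟨x, rfl⟩
        exact hc x
      have := Submodule.finrank_mono hle
      rw [hker1, hrange2] at this
      omega
    obtain ⟨v, hv⟩ := hff
    set b : Fin 3 → (Fin 3 → K) := ![v, f v, f (f v)] with hb
    have hli : LinearIndependent K b := by
      rw [Fintype.linearIndependent_iff]
      intro c hc
      rw [Fin.sum_univ_three] at hc
      simp only [hb, Matrix.cons_val_zero, Matrix.cons_val_one, Matrix.head_cons,
        Matrix.cons_val_two, Matrix.tail_cons] at hc
      have h0 : c 0 = 0 := by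
        have h1 := congrArg f (congrArg f hc)
        simp only [map_add, map_smul, hkey3, map_zero, smul_zero, add_zero] at h1
        exact (smul_eq_zero.mp h1).resolve_right hv
      have h1 : c 1 = 0 := by
        have h2 := congrArg f hc
        simp only [map_add, map_smul, hkey3, map_zero, smul_zero, add_zero, h0,
          zero_smul, zero_add] at h2
        exact (smul_eq_zero.mp h2).resolve_right hv
      have h2 : c 2 = 0 := by
        rw [h0, h1, zero_smul, zero_smul, zero_add, zero_add] at hc
        exact (smul_eq_zero.mp hc).resolve_right hv
      intro i
      fin_cases i <;> assumption
    have hspan : Submodule.span K (Set.range b) = ⊤ := by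
      apply hli.span_eq_top_of_card_eq_finrank
      simp [Module.finrank_fin_fun]
    -- every element of G acts as a polynomial in f
    have hpoly : ∀ g ∈ G, ∃ p : Polynomial K,
        Matrix.mulVecLin (↑g : Matrix (Fin 3) (Fin 3) K) = aeval f p := by
      intro g hg
      set φ : Module.End K (Fin 3 → K) := Matrix.mulVecLin (↑g : Matrix (Fin 3) (Fin 3) K) with hφ
      have hMg : M * (↑g : Matrix (Fin 3) (Fin 3) K) = (↑g : Matrix (Fin 3) (Fin 3) K) * M := by
        have h1 := (Subgroup.mem_center_iff.mp z.2 ⟨g, hg⟩).symm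
        have h2 := congrArg (fun x : G => ((x : Matrix.SpecialLinearGroup (Fin 3) K) :
          Matrix (Fin 3) (Fin 3) K)) h1
        simpa [hM] using h2
      have hcomm : φ * f = f * φ := by
        have h3 : φ * e M = e M * φ := by
          rw [hφ, ← hbridge, ← map_mul, ← map_mul, hMg]
        rw [hf, map_sub, map_one, mul_sub, sub_mul, mul_one, one_mul, h3]
      have hφf : ∀ w, φ (f w) = f (φ w) := by
        intro w
        have := LinearMap.ext_iff.mp hcomm w
        simpa [Module.End.mul_apply] using this
      have hmem : φ v ∈ Submodule.span K (Set.range b) := by rw [hspan]; trivial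
      obtain ⟨c, hc⟩ := (Submodule.mem_span_range_iff_exists_fun K).mp hmem
      rw [Fin.sum_univ_three] at hc
      simp only [hb, Matrix.cons_val_zero, Matrix.cons_val_one, Matrix.head_cons,
        Matrix.cons_val_two, Matrix.tail_cons] at hc
      refine ⟨C (c 0) + C (c 1) * X + C (c 2) * X ^ 2, ?_⟩
      have hψ : ∀ w, (aeval f (C (c 0) + C (c 1) * X + C (c 2) * X ^ 2)) w =
          c 0 • w + c 1 • f w + c 2 • f (f w) := by
        intro w
        simp [map_add, map_mul, map_pow, aeval_C, aeval_X, Module.algebraMap_end_apply,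
          LinearMap.add_apply, LinearMap.smul_apply, Module.End.mul_apply, pow_two]
      apply LinearMap.ext_on hspan
      rintro x ⟨i, rfl⟩
      fin_cases i
      · show φ v = _
        rw [hψ]
        exact hc.symm
      · show φ (f v) = _
        rw [hψ, hφf, ← hc]
        simp only [map_add, map_smul, hkey3, smul_zero, add_zero]
        simp [hb, hkey3]
      · show φ (f (f v)) = _
        rw [hψ, hφf, hφf, ← hc]
        simp only [map_add, map_smul, hkey3, map_zero, smul_zero, add_zero]
        simp [hb, hkey3]
    intro g hg h hh
    obtain ⟨p, hp⟩ := hpoly g hg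
    obtain ⟨q, hq⟩ := hpoly h hh
    have hmat : ((g * h : Matrix.SpecialLinearGroup (Fin 3) K) : Matrix (Fin 3) (Fin 3) K) =
        ((h * g : Matrix.SpecialLinearGroup (Fin 3) K) : Matrix (Fin 3) (Fin 3) K) := by
      rw [Matrix.SpecialLinearGroup.coe_mul, Matrix.SpecialLinearGroup.coe_mul]
      apply e.injective
      rw [map_mul, map_mul, hbridge, hbridge, hp, hq, ← map_mul, ← map_mul, mul_comm]
    exact Subtype.ext hmat
end

section
/- Let K be a field of characteristic 3, a ∈ K \ F₃ and b ∈ K. Then the image σ(U(a,b)) ⊆ SL(3,K) contains no pseudo-reflection, where σ(c₁,c₂) = [[1,-c₁,c₁²+c₂],[0,1,c₁],[0,0,1]] and U(a,b) = ⟨(1,0),(a,b)⟩ ≤ (K²,+). -/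
/-- K of characteristic 3, a ∉ F₃ = {0,1,-1}, b ∈ K. The image
σ(U(a,b)) ⊆ SL(3,K) contains no pseudo-reflection, where
σ(c₁,c₂) = [[1,-c₁,c₁²+c₂],[0,1,c₁],[0,0,1]] and U(a,b) = ⟨(1,0),(a,b)⟩ ≤ (K²,+). -/
theorem stmt_14 (K : Type*) [Field K] [CharP K 3]
    (a b : K) (ha : a ≠ 0 ∧ a ≠ 1 ∧ a ≠ -1) :
    ∀ c ∈ AddSubgroup.closure {((1 : K), (0 : K)), (a, b)},
      Module.finrank K
        (LinearMap.ker
          (Matrix.mulVecLin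
            (!![1, -c.1, c.1 ^ 2 + c.2; 0, 1, c.1; 0, 0, 1] : Matrix (Fin 3) (Fin 3) K)
            - LinearMap.id)) ≠ 2 := by
  intro c hc
  -- structure of elements of the closure
  set f : ZMod 3 →+* K := ZMod.castHom dvd_rfl K with hf
  have hform : ∃ m n : ZMod 3, c.1 = f m + f n * a ∧ c.2 = f n * b := by
    induction hc using AddSubgroup.closure_induction with
    | mem x hx =>
      rcases hx with h | h
      · exact ⟨1, 0, by simp [h]⟩
      · have h' : x = (a, b) := h
        exact ⟨0, 1, by simp [h']⟩
    | zero => exact ⟨0, 0, by simp⟩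
    | add x y hx hy ihx ihy =>
      obtain ⟨m, n, h1, h2⟩ := ihx
      obtain ⟨m', n', h1', h2'⟩ := ihy
      refine ⟨m + m', n + n', ?_, ?_⟩
      · show x.1 + y.1 = _
        simp only [h1, h1', map_add]; ring
      · show x.2 + y.2 = _
        simp only [h2, h2', map_add]; ring
    | neg x hx ihx =>
      obtain ⟨m, n, h1, h2⟩ := ihx
      refine ⟨-m, -n, ?_, ?_⟩
      · show -x.1 = _
        simp only [h1, map_neg]; ring
      · show -x.2 = _
        simp only [h2, map_neg]; ring
  obtain ⟨m, n, h1, h2⟩ := hform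
  by_cases hc1 : c.1 = 0
  · -- then c.2 = 0 and the matrix is the identity
    have htri : ∀ z : ZMod 3, z = 0 ∨ z = 1 ∨ z = -1 := by decide
    have key : f m + f n * a = 0 := by rw [← h1, hc1]
    have h3 : (3 : K) = 0 := by exact_mod_cast CharP.cast_eq_zero K 3
    have hn0 : f n = 0 := by
      rcases htri n with hn | hn | hn
      · rw [hn, map_zero]
      · exfalso
        rw [hn, map_one, one_mul] at key
        rcases htri m with hm | hm | hm <;> rw [hm] at key <;>
          simp only [map_zero, map_one, map_neg, zero_add] at key
        · exact ha.1 key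
        · exact ha.2.2 (by linear_combination key)
        · exact ha.2.1 (by linear_combination key)
      · exfalso
        rw [hn, map_neg, map_one, neg_one_mul] at key
        rcases htri m with hm | hm | hm <;> rw [hm] at key <;>
          simp only [map_zero, map_one, map_neg, zero_add] at key
        · exact ha.1 (by linear_combination -key)
        · exact ha.2.1 (by linear_combination -key)
        · exact ha.2.2 (by linear_combination -key)
    have hc2 : c.2 = 0 := by rw [h2, hn0, zero_mul]
    rw [hc1, hc2]
    have hmat : (!![1, -(0:K), 0 ^ 2 + 0; 0, 1, 0; 0, 0, 1] : Matrix (Fin 3) (Fin 3) K)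
        = 1 := by
      ext i j
      fin_cases i <;> fin_cases j <;> simp [Matrix.one_apply, Matrix.vecHead, Matrix.vecTail]
    rw [hmat, Matrix.mulVecLin_one, sub_self, LinearMap.ker_zero]
    rw [finrank_top]
    simp [Module.finrank_fintype_fun_eq_card]
  · -- c.1 ≠ 0 : kernel is the span of e₀, dimension 1
    have hker : LinearMap.ker
        (Matrix.mulVecLin
          (!![1, -c.1, c.1 ^ 2 + c.2; 0, 1, c.1; 0, 0, 1] : Matrix (Fin 3) (Fin 3) K)
          - LinearMap.id) = Submodule.span K {![(1:K), 0, 0]} := by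
      ext v
      simp only [LinearMap.mem_ker, LinearMap.sub_apply, Matrix.mulVecLin_apply,
        LinearMap.id_apply, sub_eq_zero, Submodule.mem_span_singleton]
      constructor
      · intro h
        have h0 := congrFun h 0
        have hone := congrFun h 1
        simp [Matrix.mulVec, dotProduct, Fin.sum_univ_three] at h0 hone
        have hv2 : v 2 = 0 := hone.resolve_left hc1
        rw [hv2] at h0
        have hv1 : v 1 = 0 := by
          have hm : c.1 * v 1 = 0 := by linear_combination -h0
          exact (mul_eq_zero.mp hm).resolve_left hc1
        refine ⟨v 0, ?_⟩
        funext i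
        fin_cases i <;> simp [hv1, hv2]
      · rintro ⟨k, rfl⟩
        funext i
        fin_cases i <;>
          simp [Matrix.mulVec, dotProduct, Fin.sum_univ_three]
    rw [hker, finrank_span_singleton]
    · norm_num
    · intro h
      have := congrFun h 0
      simp at this
end

section
/- Let K be an algebraically closed field of characteristic 3. The singular locus of the hypersurface X = V(x₂⁹ - x₃² + x₁⁹x₄ + x₁⁶H(x₁,x₂)) ⊆ A⁴, where H(s₁,s₂) = (1+α²)s₂⁶ - α²s₁²s₂⁵ + (1+α²)²s₁⁶s₂² + α²(1+α²)s₁⁸s₂² + α⁴s₁¹⁰s₂ and α ∈ K with α ≠ 0, is contained in V(x₁, x₂, x₃). -/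
open MvPolynomial

/-- K algebraically closed of characteristic 3, α ≠ 0. The singular locus of
X = V(x₂⁹ - x₃² + x₁⁹x₄ + x₁⁶H(x₁,x₂)) ⊆ 𝔸⁴, with
H(s₁,s₂) = (1+α²)s₂⁶ - α²s₁²s₂⁵ + (1+α²)²s₁⁶s₂² + α²(1+α²)s₁⁸s₂² + α⁴s₁¹⁰s₂,
is contained in V(x₁,x₂,x₃). Variables: X 0 = x₁, X 1 = x₂, X 2 = x₃, X 3 = x₄. -/
theorem stmt_15 (K : Type*) [Field K] [IsAlgClosed K] [CharP K 3] (α : K) (hα : α ≠ 0)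
    (H f : MvPolynomial (Fin 4) K)
    (hH : H = C (1 + α ^ 2) * X 1 ^ 6 - C (α ^ 2) * X 0 ^ 2 * X 1 ^ 5
        + C ((1 + α ^ 2) ^ 2) * X 0 ^ 6 * X 1 ^ 2
        + C (α ^ 2 * (1 + α ^ 2)) * X 0 ^ 8 * X 1 ^ 2
        + C (α ^ 4) * X 0 ^ 10 * X 1)
    (hf : f = X 1 ^ 9 - X 2 ^ 2 + X 0 ^ 9 * X 3 + X 0 ^ 6 * H) :
    ∀ x : Fin 4 → K, eval x f = 0 → (∀ i : Fin 4, eval x (pderiv i f) = 0) →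
      x 0 = 0 ∧ x 1 = 0 ∧ x 2 = 0 := by
  subst hH hf
  intro x h0 hp
  have h3 := hp 3
  have h2 := hp 2
  simp [pderiv_X] at h3 h2
  have htwo : (2 : K) ≠ 0 := by
    intro h
    have := (CharP.cast_eq_zero_iff K 3 2).mp (by exact_mod_cast h)
    omega
  have hx2 : x 2 = 0 := h2.resolve_left htwo
  refine ⟨h3, ?_, hx2⟩
  simp [h3, hx2] at h0
  exact h0
end

section
/- Let K be a field of characteristic 3. In the polynomial ring K[x₂,x₄,t,v], the polynomial x₂⁷·g - v², where g ∈ K[x₂,x₄,t] has nonzero constant term (e.g., g = 1 + t⁹x₄ + x₂³h for some h), is irreducible; hence V(x₂⁷g - v²) is integral. -/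
set_option maxHeartbeats 1000000
set_option synthInstance.maxHeartbeats 400000

open MvPolynomial

private lemma finSuccEquiv_rename_succ {K : Type*} [CommSemiring K] (n : ℕ)
    (g : MvPolynomial (Fin n) K) :
    finSuccEquiv K n (rename Fin.succ g) = Polynomial.C g := by
  rw [finSuccEquiv_apply, eval₂Hom_rename]
  conv_rhs => rw [← eval₂_eta g, eval₂_comp_left Polynomial.C C X g]
  simp only [coe_eval₂Hom]
  have h : ((fun i => Fin.cases Polynomial.X (fun k => Polynomial.C (X k)) i) ∘ Fin.succ :
      Fin n → Polynomial (MvPolynomial (Fin n) K)) = (⇑Polynomial.C ∘ X) := by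
    funext j
    simp
  rw [h]

private lemma key_not_dvd {R : Type*} [CommRing R] [IsDomain R] {p : R} (hp : Prime p) (g : R) :
    ∀ k : ℕ, ∀ s : R, s ^ 2 = p ^ (2 * k + 1) * g → p ∣ g := by
  intro k
  induction k with
  | zero =>
    intro s h
    have hps : p ∣ s := by
      refine hp.dvd_of_dvd_pow (n := 2) ⟨p ^ (2 * 0) * g, by rw [h]; ring⟩
    obtain ⟨s1, rfl⟩ := hps
    have h2 : p * (p * s1 ^ 2) = p * g := by
      linear_combination h
    exact ⟨s1 ^ 2, (mul_left_cancel₀ hp.ne_zero h2).symm⟩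
  | succ n ih =>
    intro s h
    have hps : p ∣ s := by
      refine hp.dvd_of_dvd_pow (n := 2) ⟨p ^ (2 * n + 2) * g, by rw [h]; ring⟩
    obtain ⟨s1, rfl⟩ := hps
    have h2 : p ^ 2 * s1 ^ 2 = p ^ 2 * (p ^ (2 * n + 1) * g) := by
      linear_combination h
    exact ih s1 (mul_left_cancel₀ (pow_ne_zero 2 hp.ne_zero) h2)

/-- K of characteristic 3. In K[x₂,x₄,t,v] (variables X 0 = x₂, X 1 = x₄,
X 2 = t, X 3 = v), the polynomial x₂⁷·g - v², where g ∈ K[x₂,x₄,t] has nonzero constant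
term (e.g. g = 1 + t⁹x₄ + x₂³h), is irreducible. -/
theorem stmt_16 (K : Type*) [Field K] [CharP K 3]
    (g : MvPolynomial (Fin 3) K) (hg : constantCoeff g ≠ 0) :
    Irreducible
      ((X 0 : MvPolynomial (Fin 4) K) ^ 7 * rename (Fin.castSucc) g - X 3 ^ 2) := by
  classical
  set c : MvPolynomial (Fin 3) K := X 0 ^ 7 * g with hc
  -- X 0 is prime in K[x₀,x₁,x₂]
  have hp : Prime (X 0 : MvPolynomial (Fin 3) K) := by
    rw [← MulEquiv.prime_iff (finSuccEquiv K 2).toMulEquiv]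
    have : (finSuccEquiv K 2).toMulEquiv (X 0) = Polynomial.X := finSuccEquiv_X_zero
    rw [this]
    exact Polynomial.prime_X
  -- c is not a square
  have hsq : ∀ s : MvPolynomial (Fin 3) K, s ^ 2 ≠ c := by
    intro s hs
    have hdvd : (X 0 : MvPolynomial (Fin 3) K) ∣ g := by
      refine key_not_dvd hp g 3 s ?_
      rw [hs, hc]
    obtain ⟨q, rfl⟩ := hdvd
    simp at hg
  -- X^2 - C c is irreducible in R[X]
  have hmonic : (Polynomial.X ^ 2 - Polynomial.C c).Monic :=
    Polynomial.monic_X_pow_sub_C c two_ne_zero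
  have hIrr : Irreducible (Polynomial.X ^ 2 - Polynomial.C c) := by
    rw [hmonic.irreducible_iff_irreducible_map_fraction_map
      (K := FractionRing (MvPolynomial (Fin 3) K))]
    rw [Polynomial.map_sub, Polynomial.map_pow, Polynomial.map_X, Polynomial.map_C]
    apply X_pow_sub_C_irreducible_of_prime Nat.prime_two
    intro b hb
    have hbint : IsIntegral (MvPolynomial (Fin 3) K) b := by
      refine ⟨Polynomial.X ^ 2 - Polynomial.C c, hmonic, ?_⟩
      simp [hb]
    obtain ⟨s, rfl⟩ := IsIntegrallyClosed.isIntegral_iff.1 hbint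
    refine hsq s ?_
    apply IsFractionRing.injective (MvPolynomial (Fin 3) K)
      (FractionRing (MvPolynomial (Fin 3) K))
    rw [map_pow]
    exact hb
  -- transfer along the algebra equivalence
  let e : MvPolynomial (Fin 4) K ≃ₐ[K] Polynomial (MvPolynomial (Fin 3) K) :=
    (renameEquiv K (finRotate 4)).trans (finSuccEquiv K 3)
  have he : e ((X 0 : MvPolynomial (Fin 4) K) ^ 7 * rename Fin.castSucc g - X 3 ^ 2)
      = Polynomial.C c - Polynomial.X ^ 2 := by
    have h0 : e (X 0) = Polynomial.C (X 0) := by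
      simp only [e, AlgEquiv.trans_apply, renameEquiv_apply, rename_X]
      rw [show (finRotate 4) (0 : Fin 4) = Fin.succ 0 by decide]
      exact finSuccEquiv_X_succ
    have h3 : e (X 3) = Polynomial.X := by
      simp only [e, AlgEquiv.trans_apply, renameEquiv_apply, rename_X]
      rw [show (finRotate 4) (3 : Fin 4) = 0 by decide]
      exact finSuccEquiv_X_zero
    have hr : e (rename Fin.castSucc g) = Polynomial.C g := by
      simp only [e, AlgEquiv.trans_apply, renameEquiv_apply]
      rw [rename_rename]
      rw [show (⇑(finRotate 4) ∘ Fin.castSucc) = (Fin.succ : Fin 3 → Fin 4) by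
        funext i; simp [finRotate_succ_apply, Fin.coeSucc_eq_succ]]
      exact finSuccEquiv_rename_succ 3 g
    rw [map_sub, map_mul, map_pow, map_pow, h0, h3, hr, hc,
      ← Polynomial.C_pow, ← Polynomial.C_mul]
  have hIrr2 : Irreducible (e ((X 0 : MvPolynomial (Fin 4) K) ^ 7
      * rename Fin.castSucc g - X 3 ^ 2)) := by
    rw [he]
    have h := ((Associated.refl (Polynomial.X ^ 2 - Polynomial.C c)).neg_right).irreducible hIrr
    rwa [neg_sub] at h
  exact (MulEquiv.irreducible_iff e.toMulEquiv).mp hIrr2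
end
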